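/- Let (Ω, ℱ, P) be a probability space, X: Ω → {0,1} measurable, Y ∈ L¹(P), 𝒢 = σ(Z) for a measurable Z. Let π be a 𝒢-measurable version of E[X | 𝒢] and let m be a 𝒢-measurable, integrable random variable with E[X·Y | 𝒢] = π·m a.s. Let π̂ and m̂ be 𝒢-measurable with ε ≤ π̂ ≤ 1 a.s. for some ε > 0 and m̂ bounded. Then the following exact identity holds: E[ (X/π̂)·(Y − m̂) + m̂ ] − E[m] = E[ (π/π̂ − 1)·(m − m̂) ]. Consequently, by Cauchy–Schwarz, the bias of the augmented IPW functional is bounded by ‖π/π̂ − 1‖_{L²(P)} · ‖m − m̂‖_{L²(P)} when these quantities are square-integrable (the 'rate double robustness' bound). -/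

import Mathlib

open MeasureTheory Set

lemma cauchy_schwarz_integral_aux {Ω : Type*} [MeasurableSpace Ω] (μ : MeasureTheory.Measure Ω)
    (f g : Ω → ℝ) (hf : MemLp f 2 μ) (hg : MemLp g 2 μ) :
    |∫ ω, f ω * g ω ∂μ| ≤ (eLpNorm f 2 μ).toReal * (eLpNorm g 2 μ).toReal := by
  have hinner : ∫ ω, f ω * g ω ∂μ = @inner ℝ _ _ (hf.toLp f) (hg.toLp g) := by
    rw [L2.inner_def]
    refine integral_congr_ae ?_
    filter_upwards [hf.coeFn_toLp, hg.coeFn_toLp] with ω h1 h2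
    rw [h1, h2, RCLike.inner_apply, conj_trivial]; ring
  calc |∫ ω, f ω * g ω ∂μ| = |@inner ℝ _ _ (hf.toLp f) (hg.toLp g)| := by rw [hinner]
    _ ≤ ‖hf.toLp f‖ * ‖hg.toLp g‖ := abs_real_inner_le_norm _ _
    _ = (eLpNorm f 2 μ).toReal * (eLpNorm g 2 μ).toReal := by
        rw [Lp.norm_toLp, Lp.norm_toLp]

/-- Exact double-robustness identity and rate double-robustness bound for
the augmented IPW functional: with binary `X`, integrable `Y`, `𝒢 = σ(Z)`, `π` a
`𝒢`-measurable version of `E[X | 𝒢]`, `m` `𝒢`-measurable integrable with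
`E[XY | 𝒢] = π·m` a.s., and `𝒢`-measurable nuisance estimates `ε ≤ π̂ ≤ 1` a.s., `m̂`
bounded, one has `E[(X/π̂)(Y − m̂) + m̂] − E[m] = E[(π/π̂ − 1)(m − m̂)]`; hence by
Cauchy–Schwarz the bias is bounded by `‖π/π̂ − 1‖₂·‖m − m̂‖₂` when these are in `L²`. -/
theorem stmt_6 {Ω E : Type*} [mΩ : MeasurableSpace Ω] [MeasurableSpace E]
    (μ : Measure Ω) [IsProbabilityMeasure μ]
    (X Y : Ω → ℝ) (Z : Ω → E)
    (hX : Measurable X) (hX01 : ∀ ω, X ω = 0 ∨ X ω = 1)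
    (hY : Integrable Y μ) (hZ : Measurable Z)
    (𝒢 : MeasurableSpace Ω) (h𝒢 : 𝒢 = MeasurableSpace.comap Z inferInstance)
    (π m πhat mhat : Ω → ℝ) (ε : ℝ) (hε : 0 < ε)
    (hπ_meas : Measurable[𝒢] π)
    (hπ_ver : π =ᵐ[μ] μ[X | 𝒢])
    (hm_meas : Measurable[𝒢] m) (hm_int : Integrable m μ)
    (hXYm : μ[fun ω => X ω * Y ω | 𝒢] =ᵐ[μ] fun ω => π ω * m ω)
    (hπhat_meas : Measurable[𝒢] πhat)
    (hπhat_bd : ∀ᵐ ω ∂μ, ε ≤ πhat ω ∧ πhat ω ≤ 1)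
    (hmhat_meas : Measurable[𝒢] mhat)
    (hmhat_bdd : ∃ B, ∀ ω, |mhat ω| ≤ B) :
    ((∫ ω, ((X ω / πhat ω) * (Y ω - mhat ω) + mhat ω) ∂μ) - ∫ ω, m ω ∂μ
      = ∫ ω, (π ω / πhat ω - 1) * (m ω - mhat ω) ∂μ) ∧
    (MemLp (fun ω => π ω / πhat ω - 1) 2 μ → MemLp (fun ω => m ω - mhat ω) 2 μ →
      |(∫ ω, ((X ω / πhat ω) * (Y ω - mhat ω) + mhat ω) ∂μ) - ∫ ω, m ω ∂μ|
        ≤ (eLpNorm (fun ω => π ω / πhat ω - 1) 2 μ).toReal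
          * (eLpNorm (fun ω => m ω - mhat ω) 2 μ).toReal) := by
  obtain ⟨B, hB⟩ := hmhat_bdd
  have hle : 𝒢 ≤ mΩ := by rw [h𝒢]; exact hZ.comap_le
  have hπhatm : Measurable[mΩ] πhat := Measurable.le hle hπhat_meas
  have hmhatm : Measurable[mΩ] mhat := Measurable.le hle hmhat_meas
  have hπm : Measurable[mΩ] π := Measurable.le hle hπ_meas
  have hmm : Measurable[mΩ] m := Measurable.le hle hm_meas
  have hX01' : ∀ ω, 0 ≤ X ω ∧ X ω ≤ 1 := by
    intro ω; rcases hX01 ω with h | h <;> rw [h] <;> norm_num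
  -- integrability of X and mhat
  have hX_int : Integrable X μ := by
    refine (integrable_const (1:ℝ)).mono' hX.aestronglyMeasurable ?_
    exact Filter.Eventually.of_forall fun ω => by
      rw [Real.norm_eq_abs, abs_le]; exact ⟨by linarith [(hX01' ω).1], (hX01' ω).2⟩
  have hmhat_int : Integrable mhat μ := by
    refine (integrable_const B).mono' hmhatm.aestronglyMeasurable ?_
    exact Filter.Eventually.of_forall fun ω => by rw [Real.norm_eq_abs]; exact hB ω
  have hXY_int : Integrable (fun ω => X ω * Y ω) μ := by
    refine hY.bdd_mul (c := 1) hX.aestronglyMeasurable ?_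
    exact Filter.Eventually.of_forall fun ω => by
      rw [Real.norm_eq_abs, abs_le]; exact ⟨by linarith [(hX01' ω).1], (hX01' ω).2⟩
  -- key swap lemma
  have key : ∀ (w h : Ω → ℝ) (C : ℝ), Measurable[𝒢] w → (∀ᵐ ω ∂μ, |w ω| ≤ C) →
      Integrable h μ →
      ∫ ω, w ω * h ω ∂μ = ∫ ω, w ω * (μ[h|𝒢]) ω ∂μ := by
    intro w h C hw hwC hh
    have hwm : Measurable[mΩ] w := Measurable.le hle hw
    have hwh : Integrable (fun ω => w ω * h ω) μ :=
      hh.bdd_mul hwm.aestronglyMeasurable (hwC.mono fun ω h => by rwa [Real.norm_eq_abs])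
    rw [← integral_condExp hle (f := fun ω => w ω * h ω) (μ := μ)]
    refine integral_congr_ae ?_
    exact condExp_mul_of_stronglyMeasurable_left hw.stronglyMeasurable hwh hh
  -- bounds on πhat inverse etc.
  have hw1_bd : ∀ᵐ ω ∂μ, |1 / πhat ω| ≤ 1 / ε := by
    filter_upwards [hπhat_bd] with ω hω
    rw [abs_div, abs_one, abs_of_pos (lt_of_lt_of_le hε hω.1)]
    exact div_le_div_of_nonneg_left one_pos.le hε hω.1
  have hw2_bd : ∀ᵐ ω ∂μ, |mhat ω / πhat ω| ≤ B / ε := by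
    filter_upwards [hπhat_bd] with ω hω
    rw [abs_div, abs_of_pos (lt_of_lt_of_le hε hω.1)]
    exact div_le_div₀ (le_trans (abs_nonneg _) (hB ω)) (hB ω) hε hω.1
  have hw1_meas : Measurable[𝒢] (fun ω => 1 / πhat ω) :=
    Measurable.const_div hπhat_meas 1
  have hw2_meas : Measurable[𝒢] (fun ω => mhat ω / πhat ω) := hmhat_meas.div hπhat_meas
  -- π bounds
  have hπbd : ∀ᵐ ω ∂μ, 0 ≤ π ω ∧ π ω ≤ 1 := by
    have h0 : (0:Ω → ℝ) ≤ᵐ[μ] μ[X|𝒢] :=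
      condExp_nonneg (Filter.Eventually.of_forall fun ω => (hX01' ω).1)
    have h1 : μ[X|𝒢] ≤ᵐ[μ] μ[(fun _ => (1:ℝ))|𝒢] :=
      condExp_mono hX_int (integrable_const 1)
        (Filter.Eventually.of_forall fun ω => (hX01' ω).2)
    have hc : μ[(fun _ => (1:ℝ))|𝒢] = fun _ => (1:ℝ) := condExp_const hle (1:ℝ)
    rw [hc] at h1
    filter_upwards [hπ_ver, h0, h1] with ω hv h0ω h1ω
    rw [hv]
    exact ⟨h0ω, h1ω⟩
  -- integrabilities of the pieces
  have I1 : Integrable (fun ω => (1 / πhat ω) * (X ω * Y ω)) μ :=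
    hXY_int.bdd_mul ((hπhatm.const_div 1).aestronglyMeasurable)
      (hw1_bd.mono fun ω h => by rwa [Real.norm_eq_abs])
  have I2 : Integrable (fun ω => (mhat ω / πhat ω) * X ω) μ :=
    hX_int.bdd_mul ((hmhatm.div hπhatm).aestronglyMeasurable)
      (hw2_bd.mono fun ω h => by rwa [Real.norm_eq_abs])
  have J1 : Integrable (fun ω => (1 / πhat ω) * (π ω * m ω)) μ := by
    refine (hm_int.bdd_mul (c := 1) hπm.aestronglyMeasurable ?_).bdd_mul
      ((hπhatm.const_div 1).aestronglyMeasurable)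
      (hw1_bd.mono fun ω h => by rwa [Real.norm_eq_abs])
    filter_upwards [hπbd] with ω hω
    rw [Real.norm_eq_abs, abs_le]; exact ⟨by linarith [hω.1], hω.2⟩
  have J2 : Integrable (fun ω => (mhat ω / πhat ω) * π ω) μ := by
    refine (integrable_const (B / ε * 1)).mono'
      ((hmhatm.div hπhatm).mul hπm).aestronglyMeasurable ?_
    filter_upwards [hw2_bd, hπbd] with ω h2 hπ
    rw [Real.norm_eq_abs, abs_mul]
    exact mul_le_mul h2 (by rw [abs_of_nonneg hπ.1]; exact hπ.2) (abs_nonneg _)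
      ((abs_nonneg _).trans h2)
  -- step 1: rewrite LHS integrand
  have step1 : ∫ ω, ((X ω / πhat ω) * (Y ω - mhat ω) + mhat ω) ∂μ
      = (∫ ω, (1 / πhat ω) * (X ω * Y ω) ∂μ) - (∫ ω, (mhat ω / πhat ω) * X ω ∂μ)
        + ∫ ω, mhat ω ∂μ := by
    have I12 : Integrable (fun ω => (1 / πhat ω) * (X ω * Y ω)
        - (mhat ω / πhat ω) * X ω) μ := I1.sub I2
    calc ∫ ω, ((X ω / πhat ω) * (Y ω - mhat ω) + mhat ω) ∂μ
        = ∫ ω, ((1 / πhat ω) * (X ω * Y ω) - (mhat ω / πhat ω) * X ω + mhat ω) ∂μ :=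
          integral_congr_ae (Filter.Eventually.of_forall fun ω => by ring)
      _ = (∫ ω, ((1 / πhat ω) * (X ω * Y ω) - (mhat ω / πhat ω) * X ω) ∂μ)
            + ∫ ω, mhat ω ∂μ := integral_add I12 hmhat_int
      _ = _ := by rw [integral_sub I1 I2]
  -- step 2: apply key
  have k1 : ∫ ω, (1 / πhat ω) * (X ω * Y ω) ∂μ
      = ∫ ω, (1 / πhat ω) * (π ω * m ω) ∂μ := by
    rw [key _ _ (1/ε) hw1_meas hw1_bd hXY_int]
    refine integral_congr_ae ?_
    filter_upwards [hXYm] with ω hω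
    rw [hω]
  have k2 : ∫ ω, (mhat ω / πhat ω) * X ω ∂μ
      = ∫ ω, (mhat ω / πhat ω) * π ω ∂μ := by
    rw [key _ _ (B/ε) hw2_meas hw2_bd hX_int]
    refine integral_congr_ae ?_
    filter_upwards [hπ_ver] with ω hω
    rw [hω]
  -- step 3: rewrite RHS
  have step3 : ∫ ω, (π ω / πhat ω - 1) * (m ω - mhat ω) ∂μ
      = (∫ ω, (1 / πhat ω) * (π ω * m ω) ∂μ) - (∫ ω, (mhat ω / πhat ω) * π ω ∂μ)
        - (∫ ω, m ω ∂μ) + ∫ ω, mhat ω ∂μ := by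
    have J12 : Integrable (fun ω => (1 / πhat ω) * (π ω * m ω)
        - (mhat ω / πhat ω) * π ω) μ := J1.sub J2
    have J123 : Integrable (fun ω => (1 / πhat ω) * (π ω * m ω)
        - (mhat ω / πhat ω) * π ω - m ω) μ := J12.sub hm_int
    calc ∫ ω, (π ω / πhat ω - 1) * (m ω - mhat ω) ∂μ
        = ∫ ω, ((1 / πhat ω) * (π ω * m ω) - (mhat ω / πhat ω) * π ω - m ω + mhat ω) ∂μ :=
          integral_congr_ae (Filter.Eventually.of_forall fun ω => by ring)
      _ = (∫ ω, ((1 / πhat ω) * (π ω * m ω) - (mhat ω / πhat ω) * π ω - m ω) ∂μ)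
            + ∫ ω, mhat ω ∂μ := integral_add J123 hmhat_int
      _ = _ := by rw [integral_sub J12 hm_int, integral_sub J1 J2]
  have main : (∫ ω, ((X ω / πhat ω) * (Y ω - mhat ω) + mhat ω) ∂μ) - ∫ ω, m ω ∂μ
      = ∫ ω, (π ω / πhat ω - 1) * (m ω - mhat ω) ∂μ := by
    rw [step1, k1, k2, step3]; ring
  refine ⟨main, fun hf hg => ?_⟩
  rw [main]
  exact @cauchy_schwarz_integral_aux Ω mΩ μ _ _ hf hg
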